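/- Let D be an n×n doubly stochastic matrix with rank r and N nonzero entries. Then N · r ≥ n². -/

import Mathlib

open Matrix Finset

/-- For an `n × n` doubly stochastic matrix with rank `r` and `N` nonzero entries,
`N · r ≥ n²`. -/
theorem doublyStochastic_card_nonzero_mul_rank {n : ℕ} (D : Matrix (Fin n) (Fin n) ℝ)
    (hpos : ∀ i j, 0 ≤ D i j)
    (hrow : ∀ i, ∑ j, D i j = 1)
    (hcol : ∀ j, ∑ i, D i j = 1) :
    n ^ 2 ≤ (Finset.univ.filter (fun p : Fin n × Fin n => D p.1 p.2 ≠ 0)).card * D.rank := by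
  classical
  set A : Matrix (Fin n) (Fin n) ℝ := Dᵀ * D with hAdef
  have hct : Dᴴ = Dᵀ := Matrix.conjTranspose_eq_transpose_of_trivial D
  have hA : A.IsHermitian := by
    rw [hAdef, ← hct]; exact Matrix.isHermitian_conjTranspose_mul_self D
  have hArank : A.rank = D.rank := Matrix.rank_transpose_mul_self D
  have hPSD : A.PosSemidef := by
    rw [hAdef, ← hct]; exact Matrix.posSemidef_conjTranspose_mul_self D
  -- entries of A are nonneg
  have hAentry : ∀ i j, A i j = ∑ m, D m i * D m j := by
    intro i j; rfl
  have hApos : ∀ i j, 0 ≤ A i j := by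
    intro i j; rw [hAentry]
    exact Finset.sum_nonneg fun m _ => mul_nonneg (hpos m i) (hpos m j)
  -- row sums of A are 1
  have hArow : ∀ i, ∑ j, A i j = 1 := by
    intro i
    simp only [hAentry]
    rw [Finset.sum_comm]
    calc ∑ m, ∑ j, D m i * D m j = ∑ m, D m i * ∑ j, D m j := by
          simp [Finset.mul_sum]
      _ = 1 := by simp [hrow, hcol]
  -- eigenvalues are in [0,1]
  have hev0 : ∀ i, 0 ≤ hA.eigenvalues i := hPSD.eigenvalues_nonneg
  have hev1 : ∀ i, hA.eigenvalues i ≤ 1 := by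
    intro i
    have hvec := hA.mulVec_eigenvectorBasis i
    have hEig : Module.End.HasEigenvalue (Matrix.toLin' A) (hA.eigenvalues i) := by
      apply Module.End.hasEigenvalue_of_hasEigenvector (x := ⇑(hA.eigenvectorBasis i))
      constructor
      · rw [Module.End.mem_eigenspace_iff, Matrix.toLin'_apply]
        simpa using hvec
      · simpa using hA.eigenvectorBasis.orthonormal.ne_zero i
    obtain ⟨k, hk⟩ := eigenvalue_mem_ball hEig
    rw [Metric.mem_closedBall, Real.dist_eq] at hk
    have hnorm : ∀ j, ‖A k j‖ = A k j := fun j => Real.norm_of_nonneg (hApos k j)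
    have hsum : ∑ j ∈ Finset.univ.erase k, ‖A k j‖ = 1 - A k k := by
      simp only [hnorm]
      rw [Finset.sum_erase_eq_sub (Finset.mem_univ k), hArow]
    rw [hsum] at hk
    have := abs_le.mp hk
    linarith [this.2]
  -- trace A = sum of eigenvalues
  have htr : A.trace = ∑ i, hA.eigenvalues i := by
    nth_rewrite 1 [hA.spectral_theorem]
    rw [Unitary.conjStarAlgAut_apply]
    rw [Matrix.trace_mul_cycle]
    rw [show (star (hA.eigenvectorUnitary : Matrix (Fin n) (Fin n) ℝ)) *
        (hA.eigenvectorUnitary : Matrix (Fin n) (Fin n) ℝ) = 1 from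
      Matrix.mem_unitaryGroup_iff'.mp hA.eigenvectorUnitary.2, one_mul]
    simp [Matrix.trace_diagonal]
  -- trace A ≤ rank
  have htrrank : A.trace ≤ (D.rank : ℝ) := by
    rw [htr, ← hArank, hA.rank_eq_card_non_zero_eigs]
    calc ∑ i, hA.eigenvalues i
        = ∑ i ∈ Finset.univ.filter (fun i => hA.eigenvalues i ≠ 0), hA.eigenvalues i := by
          rw [Finset.sum_filter_ne_zero]
      _ ≤ ∑ i ∈ Finset.univ.filter (fun i => hA.eigenvalues i ≠ 0), 1 :=
          Finset.sum_le_sum fun i _ => hev1 i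
      _ = ((Finset.univ.filter (fun i => hA.eigenvalues i ≠ 0)).card : ℝ) := by simp
      _ = (Fintype.card {i // hA.eigenvalues i ≠ 0} : ℝ) := by
          rw [Fintype.card_subtype]
  -- trace A = sum of squares
  have htrsq : A.trace = ∑ p : Fin n × Fin n, D p.1 p.2 ^ 2 := by
    rw [Matrix.trace]
    rw [Fintype.sum_prod_type]
    simp only [Matrix.diag, hAentry]
    rw [Finset.sum_comm]
    congr 1; ext m; congr 1; ext k; ring
  set s := Finset.univ.filter (fun p : Fin n × Fin n => D p.1 p.2 ≠ 0) with hs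
  -- sum of entries = n
  have hsum : ∑ p ∈ s, D p.1 p.2 = (n : ℝ) := by
    rw [hs, Finset.sum_filter_ne_zero]
    rw [Fintype.sum_prod_type]
    simp [hrow]
  have hCS : (n : ℝ) ^ 2 ≤ (s.card : ℝ) * A.trace := by
    calc (n:ℝ)^2 = (∑ p ∈ s, D p.1 p.2) ^ 2 := by rw [hsum]
      _ ≤ (s.card : ℝ) * ∑ p ∈ s, D p.1 p.2 ^ 2 := by
          exact_mod_cast sq_sum_le_card_mul_sum_sq (f := fun p : Fin n × Fin n => D p.1 p.2) (s := s)
      _ ≤ (s.card : ℝ) * A.trace := by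
          apply mul_le_mul_of_nonneg_left _ (by positivity)
          rw [htrsq]
          exact Finset.sum_le_sum_of_subset_of_nonneg (Finset.subset_univ s)
            (fun p _ _ => sq_nonneg _)
  have final : (n : ℝ) ^ 2 ≤ (s.card : ℝ) * (D.rank : ℝ) := by
    calc (n:ℝ)^2 ≤ (s.card:ℝ) * A.trace := hCS
      _ ≤ (s.card:ℝ) * (D.rank:ℝ) :=
          mul_le_mul_of_nonneg_left htrrank (by positivity)
  exact_mod_cast final
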